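/- Let X = {(x, sin(1/x)) : x ∈ (0,1]} ⊆ ℝ², equipped with the Euclidean metric of ℝ². Then every contraction f : X → X has a fixed point (even though X is not a closed, hence not a complete, subset of ℝ²). -/

import Mathlib

/-- The topologist's sine curve `{(x, sin(1/x)) : x ∈ (0,1]}` as a subset of the
Euclidean plane. -/
def sineCurve : Set (EuclideanSpace ℝ (Fin 2)) :=
  {p | ∃ x ∈ Set.Ioc (0:ℝ) 1, p 0 = x ∧ p 1 = Real.sin (1 / x)}

noncomputable def curvePt (x : ℝ) : EuclideanSpace ℝ (Fin 2) := WithLp.toLp 2 ![x, Real.sin (1/x)]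

lemma curvePt_mem {x : ℝ} (hx : x ∈ Set.Ioc (0:ℝ) 1) : curvePt x ∈ sineCurve :=
  ⟨x, hx, rfl, rfl⟩

lemma mem_sineCurve_elim {p : EuclideanSpace ℝ (Fin 2)} (hp : p ∈ sineCurve) :
    p 0 ∈ Set.Ioc (0:ℝ) 1 ∧ p = curvePt (p 0) := by
  obtain ⟨x, hx, h0, h1⟩ := hp
  subst h0
  refine ⟨hx, ?_⟩
  ext i
  fin_cases i
  · rfl
  · exact h1

lemma coord_le_dist (p q : EuclideanSpace ℝ (Fin 2)) : |p 1 - q 1| ≤ dist p q := by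
  rw [EuclideanSpace.dist_eq, Fin.sum_univ_two, Real.dist_eq, Real.dist_eq]
  calc |p 1 - q 1| = Real.sqrt (|p 1 - q 1| ^ 2) := by
        rw [Real.sqrt_sq (abs_nonneg _)]
    _ ≤ _ := by
        apply Real.sqrt_le_sqrt
        have := sq_abs (p 1 - q 1)
        nlinarith [sq_nonneg (|p 0 - q 0|)]

lemma dist_le_coords (p q : EuclideanSpace ℝ (Fin 2)) :
    dist p q ≤ |p 0 - q 0| + |p 1 - q 1| := by
  rw [EuclideanSpace.dist_eq, Fin.sum_univ_two, Real.dist_eq, Real.dist_eq]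
  calc Real.sqrt (|p 0 - q 0| ^ 2 + |p 1 - q 1| ^ 2)
      ≤ Real.sqrt ((|p 0 - q 0| + |p 1 - q 1|) ^ 2) := by
        apply Real.sqrt_le_sqrt
        nlinarith [abs_nonneg (p 0 - q 0), abs_nonneg (p 1 - q 1)]
    _ = _ := Real.sqrt_sq (by positivity)

lemma continuous_curvePt_Ioc : Continuous (fun t : Set.Ioc (0:ℝ) 1 => curvePt t) := by
  have h1 : Continuous fun t : Set.Ioc (0:ℝ) 1 => (![(t:ℝ), Real.sin (1/(t:ℝ))] : Fin 2 → ℝ) := by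
    apply continuous_pi
    intro i
    fin_cases i
    · simpa using continuous_subtype_val
    · simp only [Matrix.cons_val_one, Matrix.head_cons]
      exact Real.continuous_sin.comp (continuous_const.div continuous_subtype_val
        (fun t => ne_of_gt t.2.1))
  exact (PiLp.continuous_toLp 2 (fun _ : Fin 2 => ℝ)).comp h1

lemma sin_pi_div_two_add_nat (k : ℕ) :
    Real.sin (Real.pi/2 + k * Real.pi) = (-1)^k := by
  induction k with
  | zero => simp
  | succ n ih =>
    push_cast
    rw [show (Real.pi/2 + (n+1) * Real.pi) = (Real.pi/2 + n*Real.pi) + Real.pi by ring,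
      Real.sin_add_pi, ih]
    ring

/-- Chain of points with prescribed `g`-values, built by repeated IVT. -/
lemma exists_chain (g : ℝ → ℝ) (s : ℝ) (hs1 : s ≤ 1)
    (hg : ContinuousOn g (Set.Icc s 1))
    (c : ℕ → ℝ) (hdec : ∀ j, c (j+1) ≤ c j)
    (hlow : ∀ j, g s < c j) (hhigh : ∀ j, c j < g 1) :
    ∀ n : ℕ, ∃ x : ℕ → ℝ,
      (∀ j, j ≤ n → x j ∈ Set.Icc s 1 ∧ g (x j) = c j) ∧
      (∀ j, j + 1 ≤ n → x (j+1) ≤ x j) := by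
  intro n
  induction n with
  | zero =>
    obtain ⟨x0, hx0, hgx0⟩ := intermediate_value_Icc hs1 hg ⟨(hlow 0).le, (hhigh 0).le⟩
    refine ⟨fun _ => x0, fun j hj => ?_, fun j hj => by omega⟩
    interval_cases j
    exact ⟨hx0, hgx0⟩
  | succ n ih =>
    obtain ⟨x, hx, hmono⟩ := ih
    have hxn := hx n le_rfl
    obtain ⟨y, hy, hgy⟩ := intermediate_value_Icc hxn.1.1
      (hg.mono (Set.Icc_subset_Icc le_rfl hxn.1.2))
      ⟨(hlow (n+1)).le, by rw [hxn.2]; exact hdec n⟩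
    refine ⟨fun j => if j ≤ n then x j else y, fun j hj => ?_, fun j hj => ?_⟩
    · by_cases h : j ≤ n
      · simpa [h] using hx j h
      · have hj' : j = n + 1 := by omega
        subst hj'
        simp only [if_neg h]
        exact ⟨⟨hy.1, le_trans hy.2 hxn.1.2⟩, hgy⟩
    · by_cases h : j + 1 ≤ n
      · simp only [if_pos h, if_pos (by omega : j ≤ n)]
        exact hmono j h
      · have hj' : j = n := by omega
        subst hj'
        simp only [if_neg (by omega : ¬ j + 1 ≤ j), if_pos (le_refl j)]
        exact hy.2

/-- Elekes: every contraction of the set `{(x, sin(1/x)) : x ∈ (0,1]} ⊆ ℝ²` (with the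
Euclidean metric) into itself has a fixed point. -/
theorem sineCurve_contraction_fixedPoint
    (f : sineCurve → sineCurve)
    (hf : ∃ α : ℝ, 0 ≤ α ∧ α < 1 ∧ ∀ x y : sineCurve, dist (f x) (f y) ≤ α * dist x y) :
    ∃ x : sineCurve, f x = x := by
  by_contra hno
  push_neg at hno
  obtain ⟨α, hα0, hα1, hlip⟩ := hf
  have hπ := Real.pi_gt_three
  -- f is continuous
  have hfc : Continuous f := by
    have : LipschitzWith (Real.toNNReal α) f := by
      apply LipschitzWith.of_dist_le_mul
      intro x y
      rw [Real.coe_toNNReal α hα0]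
      exact hlip x y
    exact this.continuous
  -- the parameter map g
  set g : ℝ → ℝ := fun t =>
    if ht : t ∈ Set.Ioc (0:ℝ) 1 then
      ((f ⟨curvePt t, curvePt_mem ht⟩ : sineCurve) : EuclideanSpace ℝ (Fin 2)) 0
    else t with hgdef
  have key : ∀ t (ht : t ∈ Set.Ioc (0:ℝ) 1), g t ∈ Set.Ioc (0:ℝ) 1 ∧
      ((f ⟨curvePt t, curvePt_mem ht⟩ : sineCurve) : EuclideanSpace ℝ (Fin 2))
        = curvePt (g t) := by
    intro t ht
    have hmem := mem_sineCurve_elim (f ⟨curvePt t, curvePt_mem ht⟩).2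
    have hg : g t = ((f ⟨curvePt t, curvePt_mem ht⟩ : sineCurve) :
        EuclideanSpace ℝ (Fin 2)) 0 := by
      simp only [hgdef]
      exact dif_pos ht
    rw [hg]
    exact hmem
  -- g is continuous on (0,1]
  have hgc : ContinuousOn g (Set.Ioc (0:ℝ) 1) := by
    rw [continuousOn_iff_continuous_restrict]
    have heq : (Set.Ioc (0:ℝ) 1).domRestrict g = fun t : Set.Ioc (0:ℝ) 1 =>
        ((f ⟨curvePt t, curvePt_mem t.2⟩ : sineCurve) : EuclideanSpace ℝ (Fin 2)) 0 := by
      funext t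
      simp only [Set.domRestrict_apply, hgdef, dif_pos t.2]
    rw [heq]
    have hΓ : Continuous fun t : Set.Ioc (0:ℝ) 1 =>
        (⟨curvePt t, curvePt_mem t.2⟩ : sineCurve) :=
      Continuous.subtype_mk continuous_curvePt_Ioc _
    exact ((EuclideanSpace.proj (0 : Fin 2) : EuclideanSpace ℝ (Fin 2) →L[ℝ] ℝ).continuous).comp
      ((continuous_subtype_val).comp (hfc.comp hΓ))
  -- g has no fixed point on (0,1]
  have hnofix : ∀ t (_ : t ∈ Set.Ioc (0:ℝ) 1), g t ≠ t := by
    intro t ht hfix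
    have hk := (key t ht).2
    rw [hfix] at hk
    exact hno ⟨curvePt t, curvePt_mem ht⟩ (Subtype.ext hk)
  have h1mem : (1:ℝ) ∈ Set.Ioc (0:ℝ) 1 := ⟨zero_lt_one, le_refl 1⟩
  have hg1 : g 1 ∈ Set.Ioc (0:ℝ) 1 := (key 1 h1mem).1
  have hg1lt : g 1 < 1 := lt_of_le_of_ne hg1.2 (hnofix 1 h1mem)
  -- g t < t on (0,1]
  have hlt : ∀ t, t ∈ Set.Ioc (0:ℝ) 1 → g t < t := by
    intro t ht
    by_contra hge
    push_neg at hge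
    have hgt : t < g t := lt_of_le_of_ne hge (fun h => hnofix t ht h.symm)
    have hsub : Set.Icc t 1 ⊆ Set.Ioc (0:ℝ) 1 :=
      fun y hy => ⟨lt_of_lt_of_le ht.1 hy.1, hy.2⟩
    have hcont : ContinuousOn (fun u => g u - u) (Set.Icc t 1) :=
      (hgc.mono hsub).sub continuousOn_id
    obtain ⟨u, hu, hu0⟩ := intermediate_value_Icc' ht.2 hcont
      ⟨by show g 1 - 1 ≤ 0; linarith, by show (0:ℝ) ≤ g t - t; linarith⟩
    exact hnofix u (hsub hu) (by simpa [sub_eq_zero] using hu0)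
  -- choose k₀
  obtain ⟨k₀, hk₀⟩ := exists_nat_gt (1 / g 1)
  -- denominators
  set D : ℕ → ℝ := fun j => Real.pi/2 + (k₀ + j) * Real.pi with hDdef
  have hDpos : ∀ j, 0 < D j := by
    intro j
    simp only [hDdef]
    positivity
  set c : ℕ → ℝ := fun j => (D j)⁻¹ with hcdef
  have hcpos : ∀ j, 0 < c j := fun j => inv_pos.mpr (hDpos j)
  have hDmono : ∀ j, D j < D (j+1) := by
    intro j
    simp only [hDdef]
    push_cast
    nlinarith
  have hcdec : ∀ j, c (j+1) < c j := by
    intro j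
    exact inv_strictAnti₀ (hDpos j) (hDmono j)
  have hchigh : ∀ j, c j < g 1 := by
    intro j
    have hj0 : (0:ℝ) ≤ (j:ℝ) := Nat.cast_nonneg j
    have hk0 : (0:ℝ) ≤ (k₀:ℝ) := Nat.cast_nonneg k₀
    have hD0 : 1 / g 1 < D j := by
      simp only [hDdef]
      nlinarith [mul_nonneg hk0 (by linarith : (0:ℝ) ≤ Real.pi - 1),
        mul_nonneg hj0 (by linarith : (0:ℝ) ≤ Real.pi)]
    have := inv_lt_of_inv_lt₀ hg1.1 (by rwa [one_div] at hD0)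
    simpa [hcdef] using this
  -- choose N
  obtain ⟨N', hN'⟩ := exists_nat_gt (α / (2 * (1 - α)))
  set N : ℕ := N' + 1 with hNdef
  have hNpos : 0 < N := Nat.succ_pos _
  have hNineq : α < 2 * N * (1 - α) := by
    have h2 : 0 < 2 * (1 - α) := by linarith
    have : α / (2 * (1 - α)) < N := by
      have : (N' : ℝ) ≤ N := by exact_mod_cast Nat.le_succ N'
      linarith
    calc α = (α / (2 * (1 - α))) * (2 * (1 - α)) := by field_simp; rw [mul_div_assoc, div_self (by linarith : (0:ℝ) < 1 - α).ne', mul_one]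
      _ < N * (2 * (1 - α)) := by apply mul_lt_mul_of_pos_right this h2
      _ = 2 * N * (1 - α) := by ring
  -- choose s
  set s : ℝ := c N / 2 with hsdef
  have hs : s ∈ Set.Ioc (0:ℝ) 1 := by
    constructor
    · simp only [hsdef]; positivity
    · have := hchigh N
      have := hg1.2
      simp only [hsdef]
      linarith [hcpos N]
  have hIccsub : Set.Icc s 1 ⊆ Set.Ioc (0:ℝ) 1 :=
    fun y hy => ⟨lt_of_lt_of_le hs.1 hy.1, hy.2⟩
  have hAnti : Antitone c := antitone_nat_of_succ_le (fun n => (hcdec n).le)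
  have hslow : ∀ j, g s < c (min j N) := by
    intro j
    have h1 : g s < s := hlt s hs
    have h2 : s < c N := by simp only [hsdef]; linarith [hcpos N]
    have h3 : c N ≤ c (min j N) := hAnti (min_le_right j N)
    linarith
  -- build the chain
  obtain ⟨x, hx, hmono⟩ := exists_chain g s hs.2 (hgc.mono hIccsub)
    (fun j => c (min j N))
    (fun j => hAnti (min_le_min (Nat.le_succ j) (le_refl N)))
    hslow (fun j => hchigh (min j N)) N
  have hx : ∀ j, j ≤ N → x j ∈ Set.Icc s 1 ∧ g (x j) = c j := by
    intro j hj
    have := hx j hj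
    rwa [min_eq_left hj] at this
  -- the points on the curve
  have hxmem : ∀ j, x (min j N) ∈ Set.Ioc (0:ℝ) 1 :=
    fun j => hIccsub (hx (min j N) (min_le_right _ _)).1
  set u : ℕ → sineCurve := fun j => ⟨curvePt (x (min j N)), curvePt_mem (hxmem j)⟩ with hudef
  -- image points
  have himg : ∀ j, j ≤ N → ((f (u j) : sineCurve) : EuclideanSpace ℝ (Fin 2))
      = curvePt (c j) := by
    intro j hj
    have hmin : min j N = j := min_eq_left hj
    have := (key (x (min j N)) (hxmem j)).2
    simp only [hudef]
    rw [this]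
    have hgx : g (x (min j N)) = c j := by rw [hmin]; exact (hx j hj).2
    rw [hgx]
  -- second coordinate of curvePt (c j)
  have hsnd : ∀ j, (curvePt (c j)) 1 = (-1:ℝ)^(k₀+j) := by
    intro j
    show Real.sin (1 / c j) = _
    have : 1 / c j = D j := by
      simp only [hcdef, one_div, inv_inv]
    rw [this, hDdef]
    push_cast
    exact_mod_cast sin_pi_div_two_add_nat (k₀ + j)
  -- lower bound on image distances
  have hA : ∀ j, j < N → (2:ℝ) ≤ dist (f (u j)) (f (u (j+1))) := by
    intro j hj
    rw [Subtype.dist_eq, himg j hj.le, himg (j+1) hj]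
    have h := coord_le_dist (curvePt (c j)) (curvePt (c (j+1)))
    rw [hsnd j, hsnd (j+1)] at h
    have heq : ((-1:ℝ))^(k₀+j) - (-1)^(k₀+(j+1)) = 2 * (-1)^(k₀+j) := by
      rw [show k₀+(j+1) = (k₀+j)+1 by ring, pow_succ]
      ring
    rw [heq, abs_mul, abs_pow, abs_neg, abs_one, one_pow, mul_one] at h
    simpa using h
  -- upper bound on source distances
  have hB : ∀ j, j < N → dist (u j) (u (j+1)) ≤ (x j - x (j+1)) + 2 := by
    intro j hj
    have hminj : min j N = j := min_eq_left hj.le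
    have hminj1 : min (j+1) N = j + 1 := min_eq_left hj
    rw [Subtype.dist_eq]
    simp only [hudef, hminj, hminj1]
    have h := dist_le_coords (curvePt (x j)) (curvePt (x (j+1)))
    have h0 : (curvePt (x j)) 0 - (curvePt (x (j+1))) 0 = x j - x (j+1) := rfl
    have h1 : |(curvePt (x j)) 1 - (curvePt (x (j+1))) 1| ≤ 2 := by
      have hb1 := Real.abs_sin_le_one (1 / x j)
      have hb2 := Real.abs_sin_le_one (1 / x (j+1))
      have := abs_sub (Real.sin (1 / x j)) (Real.sin (1 / x (j+1)))
      show |Real.sin (1 / x j) - Real.sin (1 / x (j+1))| ≤ 2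
      linarith
    have hxd : |x j - x (j+1)| = x j - x (j+1) :=
      abs_of_nonneg (by linarith [hmono j hj])
    rw [h0, hxd] at h
    linarith
  -- sum up
  have hsum : (2 * N : ℝ) ≤ α * ((x 0 - x N) + 2 * N) := by
    calc (2 * N : ℝ) = ∑ _j ∈ Finset.range N, (2:ℝ) := by
          rw [Finset.sum_const, Finset.card_range, nsmul_eq_mul]; ring
      _ ≤ ∑ j ∈ Finset.range N, dist (f (u j)) (f (u (j+1))) := by
          apply Finset.sum_le_sum
          intro j hj
          exact hA j (Finset.mem_range.mp hj)
      _ ≤ ∑ j ∈ Finset.range N, α * dist (u j) (u (j+1)) := by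
          apply Finset.sum_le_sum
          intro j _
          exact hlip _ _
      _ ≤ ∑ j ∈ Finset.range N, α * ((x j - x (j+1)) + 2) := by
          apply Finset.sum_le_sum
          intro j hj
          exact mul_le_mul_of_nonneg_left (hB j (Finset.mem_range.mp hj)) hα0
      _ = α * ((x 0 - x N) + 2 * N) := by
          rw [← Finset.mul_sum, Finset.sum_add_distrib, Finset.sum_range_sub' x N,
            Finset.sum_const, Finset.card_range, nsmul_eq_mul]
          ring
  -- contradiction
  have hx0 : x 0 ∈ Set.Icc s 1 := (hx 0 (Nat.zero_le _)).1
  have hxN : x N ∈ Set.Icc s 1 := (hx N le_rfl).1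
  have hdiff : x 0 - x N ≤ 1 := by
    have := hx0.2
    have := hxN.1
    have := hs.1
    linarith
  have hfinal : (2 * N : ℝ) ≤ α * (1 + 2 * N) := by
    calc (2 * N : ℝ) ≤ α * ((x 0 - x N) + 2 * N) := hsum
      _ ≤ α * (1 + 2 * N) := by
          apply mul_le_mul_of_nonneg_left _ hα0
          linarith
  nlinarith
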